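/- arXiv:2412.04113 — 2 statements merged into one kernel-verified Lean document; each statement's English description precedes it below -/
import Mathlib

section
/- Vector-valued version of the constant-flux lemma: let d ≥ 1, let u : ℝ → ℝ^d be differentiable, and let A : ℝ → Matrix(d,d,ℝ) take symmetric values satisfying the uniform ellipticity bounds a‖ξ‖² ≤ ξᵀ A(z) ξ ≤ b‖ξ‖² for all z ∈ ℝ, ξ ∈ ℝ^d, with constants 0 < a ≤ b. If z ↦ A(z)·u'(z) is constant on ℝ and u tends to finite limits as z → +∞ and as z → −∞, then u'(z) = 0 for all z; hence u is constant and the leading-order inner displacement has no jump across the interface. -/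
open Matrix

/-- Cauchy–Schwarz for a positive semidefinite symmetric bilinear form given by
a matrix. -/
lemma cs_psd {d : ℕ} (A : Matrix (Fin d) (Fin d) ℝ) (hA : A.IsSymm)
    (hpos : ∀ ξ : Fin d → ℝ, 0 ≤ ξ ⬝ᵥ A.mulVec ξ) (x y : Fin d → ℝ) :
    (x ⬝ᵥ A.mulVec y) ^ 2 ≤ (x ⬝ᵥ A.mulVec x) * (y ⬝ᵥ A.mulVec y) := by
  have hsym : ∀ v w : Fin d → ℝ, v ⬝ᵥ A.mulVec w = w ⬝ᵥ A.mulVec v := by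
    intro v w
    rw [Matrix.dotProduct_mulVec, ← Matrix.mulVec_transpose, hA.eq,
      dotProduct_comm]
  have key : ∀ t : ℝ, 0 ≤ (y ⬝ᵥ A.mulVec y) * (t * t) +
      (2 * (x ⬝ᵥ A.mulVec y)) * t + (x ⬝ᵥ A.mulVec x) := by
    intro t
    have h := hpos (x + t • y)
    have hexp : (x + t • y) ⬝ᵥ A.mulVec (x + t • y)
        = (y ⬝ᵥ A.mulVec y) * (t * t) + (2 * (x ⬝ᵥ A.mulVec y)) * t
          + (x ⬝ᵥ A.mulVec x) := by
      simp only [Matrix.mulVec_add, Matrix.mulVec_smul, add_dotProduct,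
        dotProduct_add, smul_dotProduct, dotProduct_smul,
        smul_eq_mul]
      rw [hsym y x]
      ring
    linarith [hexp ▸ h]
  have hd := discrim_le_zero key
  rw [discrim] at hd
  nlinarith [hd]

/-- Vector-valued constant-flux lemma (no jump in the leading-order inner
displacement): if `u : ℝ → ℝ^d` is differentiable, `A` takes symmetric values and
is uniformly elliptic with constants `0 < a ≤ b`, the flux `A · u'` is constant,
and `u` has finite limits at `±∞`, then `u' ≡ 0`, `u` is constant, and the two
limits coincide. -/
theorem stmt12 (d : ℕ) (hd : 1 ≤ d)
    (u : ℝ → EuclideanSpace ℝ (Fin d))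
    (A : ℝ → Matrix (Fin d) (Fin d) ℝ)
    (hu : Differentiable ℝ u)
    (hsymm : ∀ z : ℝ, (A z).IsSymm)
    (a b : ℝ) (ha : 0 < a) (hab : a ≤ b)
    (hell : ∀ (z : ℝ) (ξ : EuclideanSpace ℝ (Fin d)),
      a * ‖ξ‖ ^ 2 ≤ ξ ⬝ᵥ (A z).mulVec ξ ∧ ξ ⬝ᵥ (A z).mulVec ξ ≤ b * ‖ξ‖ ^ 2)
    (hflux : ∃ c : Fin d → ℝ, ∀ z : ℝ, (A z).mulVec (WithLp.ofLp (deriv u z)) = c)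
    (Lp Lm : EuclideanSpace ℝ (Fin d))
    (hLp : Filter.Tendsto u Filter.atTop (nhds Lp))
    (hLm : Filter.Tendsto u Filter.atBot (nhds Lm)) :
    (∀ z : ℝ, deriv u z = 0) ∧ (∀ z w : ℝ, u z = u w) ∧ Lp = Lm := by
  obtain ⟨c, hc⟩ := hflux
  have hderiv_eq : ∀ z : ℝ,
      deriv (fun z => WithLp.ofLp (u z)) z = WithLp.ofLp (deriv u z) := by
    intro z
    have h := (PiLp.continuousLinearEquiv 2 ℝ
      (fun _ : Fin d => ℝ)).toContinuousLinearMap.hasFDerivAt.comp_hasDerivAt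
      z (hu z).hasDerivAt
    exact h.deriv
  have hb : 0 < b := lt_of_lt_of_le ha hab
  have hpos : ∀ (z : ℝ) (ξ : Fin d → ℝ), 0 ≤ ξ ⬝ᵥ (A z).mulVec ξ := by
    intro z ξ
    refine le_trans ?_ (hell z (WithLp.toLp 2 ξ)).1
    positivity
  have hnorm : ∀ ξ : EuclideanSpace ℝ (Fin d), ‖ξ‖ ^ 2 = ξ ⬝ᵥ ξ := by
    intro ξ
    rw [EuclideanSpace.norm_eq, Real.sq_sqrt (by positivity)]
    simp [dotProduct, pow_two]
  -- the linear functional ⟪c, ·⟫ along u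
  have hinner : ∀ v : EuclideanSpace ℝ (Fin d),
      (inner ℝ ((WithLp.equiv 2 (Fin d → ℝ)).symm c) v : ℝ) = c ⬝ᵥ v := by
    intro v
    rw [PiLp.inner_apply]
    simp [dotProduct, mul_comm]
  have hφ : ∀ z : ℝ, HasDerivAt (fun z => c ⬝ᵥ u z)
      (c ⬝ᵥ deriv (fun z => WithLp.ofLp (u z)) z) z := by
    intro z
    rw [hderiv_eq z]
    have h := (innerSL ℝ ((WithLp.equiv 2 (Fin d → ℝ)).symm c)).hasFDerivAt.comp_hasDerivAt
      z (hu z).hasDerivAt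
    simpa only [Function.comp_def, innerSL_apply_apply, hinner] using h
  -- c = 0
  have hczero : c = 0 := by
    by_contra hc0
    have h0 : 0 ≤ c ⬝ᵥ c := by simpa using dotProduct_self_star_nonneg c
    have hcc : 0 < c ⬝ᵥ c :=
      lt_of_le_of_ne h0 (fun h => hc0 (dotProduct_self_eq_zero.mp h.symm))
    -- pointwise lower bound on deriv of φ
    have hlow : ∀ z : ℝ, (c ⬝ᵥ c) / b ≤ deriv (fun z => c ⬝ᵥ u z) z := by
      intro z
      rw [(hφ z).deriv, hderiv_eq z]
      have hsq := cs_psd (A z) (hsymm z) (hpos z) c (WithLp.ofLp (deriv u z))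
      have hAc : c ⬝ᵥ (A z).mulVec c ≤ b * (c ⬝ᵥ c) := by
        have h2 := (hell z ((WithLp.equiv 2 (Fin d → ℝ)).symm c)).2
        rwa [hnorm] at h2
      have hcu : c ⬝ᵥ (A z).mulVec (WithLp.ofLp (deriv u z)) = c ⬝ᵥ c := by rw [hc z]
      have huu : WithLp.ofLp (deriv u z) ⬝ᵥ (A z).mulVec (WithLp.ofLp (deriv u z)) = c ⬝ᵥ WithLp.ofLp (deriv u z) := by
        rw [hc z, dotProduct_comm]
      have hY : (0:ℝ) ≤ c ⬝ᵥ WithLp.ofLp (deriv u z) := huu ▸ hpos z (WithLp.ofLp (deriv u z))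
      rw [hcu, huu] at hsq
      rw [div_le_iff₀ hb]
      nlinarith [hsq, hAc, hcc, hY, hpos z c,
        mul_le_mul_of_nonneg_right hAc hY]
    have hdiff : Differentiable ℝ (fun z => c ⬝ᵥ u z) :=
      fun z => (hφ z).differentiableAt
    have hgrow : Filter.Tendsto (fun z => c ⬝ᵥ u z) Filter.atTop Filter.atTop := by
      have h1 : ∀ z : ℝ, 0 ≤ z → (c ⬝ᵥ c) / b * z + c ⬝ᵥ u 0 ≤ c ⬝ᵥ u z := by
        intro z hz
        have := mul_sub_le_image_sub_of_le_deriv hdiff hlow hz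
        simp only [sub_zero] at this
        linarith
      have hK : 0 < (c ⬝ᵥ c) / b := div_pos hcc hb
      have htend : Filter.Tendsto (fun z : ℝ => (c ⬝ᵥ c) / b * z + c ⬝ᵥ u 0)
          Filter.atTop Filter.atTop :=
        Filter.tendsto_atTop_add_const_right _ _
          ((Filter.tendsto_const_mul_atTop_of_pos hK).mpr Filter.tendsto_id)
      refine Filter.tendsto_atTop_mono' _ ?_ htend
      filter_upwards [Filter.eventually_ge_atTop (0 : ℝ)] with z hz
      exact h1 z hz
    have hconv : Filter.Tendsto (fun z => c ⬝ᵥ u z) Filter.atTop (nhds (c ⬝ᵥ Lp)) := by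
      have := ((innerSL ℝ ((WithLp.equiv 2 (Fin d → ℝ)).symm c)).continuous.tendsto Lp).comp hLp
      simpa only [Function.comp_def, innerSL_apply_apply, hinner] using this
    exact not_tendsto_nhds_of_tendsto_atTop hgrow _ hconv
  -- derivative vanishes
  have hderiv : ∀ z : ℝ, deriv u z = 0 := by
    intro z
    have h1 := (hell z (deriv u z)).1
    have h2 : WithLp.ofLp (deriv u z) ⬝ᵥ (A z).mulVec (WithLp.ofLp (deriv u z)) = 0 := by
      rw [hc z, hczero, dotProduct_zero]
    rw [h2] at h1
    have hn : ‖deriv u z‖ = 0 := by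
      by_contra hne
      have hp : 0 < ‖deriv u z‖ := lt_of_le_of_ne (norm_nonneg _) (Ne.symm hne)
      rw [pow_two] at h1
      nlinarith [mul_pos ha (mul_pos hp hp)]
    exact norm_eq_zero.mp hn
  have hconst : ∀ z w : ℝ, u z = u w := is_const_of_deriv_eq_zero hu hderiv
  refine ⟨hderiv, hconst, ?_⟩
  have hcu : u = fun _ => u 0 := funext fun z => hconst z 0
  have h1 : Filter.Tendsto u Filter.atTop (nhds (u 0)) := by
    rw [hcu]; exact tendsto_const_nhds
  have h2 : Filter.Tendsto u Filter.atBot (nhds (u 0)) := by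
    rw [hcu]; exact tendsto_const_nhds
  rw [tendsto_nhds_unique hLp h1, tendsto_nhds_unique hLm h2]
end

section
/- Interfacial phase-field flux balance: let m > 0, v ∈ ℝ, and let μ : ℝ → ℝ be twice differentiable with −v·φ₀'(z) − m·μ''(z) = 0 for all real z. If μ'(z) tends to finite limits L₊ as z → +∞ and L₋ as z → −∞, then v = −m·(L₊ − L₋); i.e., the normal velocity of the interface equals minus the mobility times the jump in the normal derivative of the chemical potential across the interface. -/
/-- The interface profile `φ₀(z) = 1/(1 + e^{-√2 z})`. -/
noncomputable def φ₀ : ℝ → ℝ := fun z => 1 / (1 + Real.exp (-(Real.sqrt 2) * z))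

lemma denom_pos (z : ℝ) : 0 < 1 + Real.exp (-(Real.sqrt 2) * z) := by
  positivity

lemma φ₀_diff : Differentiable ℝ φ₀ := by
  unfold φ₀
  intro z
  apply DifferentiableAt.div (differentiableAt_const 1)
  · exact (differentiableAt_const 1).add ((Real.differentiable_exp _).comp z
      ((differentiable_const _).mul differentiable_id _))
  · exact ne_of_gt (denom_pos z)

lemma φ₀_top : Filter.Tendsto φ₀ Filter.atTop (nhds 1) := by
  have h : Filter.Tendsto (fun z : ℝ => Real.exp (-(Real.sqrt 2) * z)) Filter.atTop (nhds 0) := by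
    apply Real.tendsto_exp_atBot.comp
    apply Filter.Tendsto.const_mul_atTop_of_neg
    · simpa using Real.sqrt_pos.mpr (by norm_num : (0:ℝ) < 2)
    · exact Filter.tendsto_id
  have hd : Filter.Tendsto (fun z : ℝ => 1 + Real.exp (-(Real.sqrt 2) * z))
      Filter.atTop (nhds 1) := by
    simpa using (tendsto_const_nhds (x := (1:ℝ))).add h
  have hinv := hd.inv₀ (one_ne_zero)
  norm_num at hinv
  exact hinv.congr (fun z => by simp [φ₀, one_div])

lemma φ₀_bot : Filter.Tendsto φ₀ Filter.atBot (nhds 0) := by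
  have h : Filter.Tendsto (fun z : ℝ => 1 + Real.exp (-(Real.sqrt 2) * z)) Filter.atBot Filter.atTop := by
    apply Filter.tendsto_atTop_add_const_left
    apply Real.tendsto_exp_atTop.comp
    apply Filter.Tendsto.const_mul_atBot_of_neg
    · simpa using Real.sqrt_pos.mpr (by norm_num : (0:ℝ) < 2)
    · exact Filter.tendsto_id
  exact h.inv_tendsto_atTop.congr (fun z => by simp [φ₀, one_div])

/-- Interfacial phase-field flux balance: if `-v φ₀' - m μ'' = 0` on `ℝ` for a
twice differentiable `μ` whose derivative has finite limits `L₊`, `L₋` at `±∞`,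
then the normal interface velocity satisfies `v = -m (L₊ - L₋)`. -/
theorem stmt14 (m v : ℝ) (hm : 0 < m) (μ : ℝ → ℝ)
    (hμ : Differentiable ℝ μ) (hμ' : Differentiable ℝ (deriv μ))
    (heq : ∀ z : ℝ, -v * deriv φ₀ z - m * deriv (deriv μ) z = 0)
    (Lp Lm : ℝ)
    (hLp : Filter.Tendsto (deriv μ) Filter.atTop (nhds Lp))
    (hLm : Filter.Tendsto (deriv μ) Filter.atBot (nhds Lm)) :
    v = -m * (Lp - Lm) := by
  set g : ℝ → ℝ := fun z => deriv μ z + (v / m) * φ₀ z with hg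
  have hgdiff : Differentiable ℝ g := hμ'.add (φ₀_diff.const_mul _)
  have hgderiv : ∀ z, deriv g z = 0 := by
    intro z
    have h1 : deriv g z = deriv (deriv μ) z + (v / m) * deriv φ₀ z := by
      rw [hg]
      rw [deriv_fun_add (hμ' z) ((φ₀_diff z).const_mul _), deriv_const_mul _ (φ₀_diff z)]
    have h2 := heq z
    rw [h1]
    field_simp
    linarith
  have hconst : ∀ x y : ℝ, g x = g y := fun x y =>
    is_const_of_deriv_eq_zero hgdiff hgderiv x y
  have htop : Filter.Tendsto g Filter.atTop (nhds (Lp + (v / m) * 1)) :=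
    hLp.add (φ₀_top.const_mul _)
  have hbot : Filter.Tendsto g Filter.atBot (nhds (Lm + (v / m) * 0)) :=
    hLm.add (φ₀_bot.const_mul _)
  have hc : g = fun _ => g 0 := funext fun x => hconst x 0
  have e1 : Lp + (v / m) * 1 = g 0 := by
    have : Filter.Tendsto g Filter.atTop (nhds (g 0)) := by
      rw [hc]; exact tendsto_const_nhds
    exact tendsto_nhds_unique htop this
  have e2 : Lm + (v / m) * 0 = g 0 := by
    have : Filter.Tendsto g Filter.atBot (nhds (g 0)) := by
      rw [hc]; exact tendsto_const_nhds
    exact tendsto_nhds_unique hbot this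
  have : Lp + v / m = Lm := by linarith
  field_simp at this
  linarith
end
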